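/- Let d ≥ 1, let ε > 0, let g ∈ ℝ^d, and let G = diag(g) ∈ ℝ^{d×d}. Define RMSNorm(x) = G · x / √((1/d)‖x‖₂² + ε) for x ∈ ℝ^d. Then for all x₁, x₂ ∈ ℝ^d, ‖RMSNorm(x₁) − RMSNorm(x₂)‖₂ ≤ (‖g‖_∞ / √ε) · ‖x₁ − x₂‖₂, where ‖g‖_∞ = max_i |g_i|. -/

import Mathlib

lemma rms_key (d ε u v t a b : ℝ) (hd : 1 ≤ d) (hε : 0 < ε)
    (hu : 0 ≤ u) (hv : 0 ≤ v) (ht : t ≤ u * v)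
    (ha : 0 ≤ a) (hb : 0 ≤ b)
    (ha2 : a ^ 2 = u ^ 2 / d + ε) (hb2 : b ^ 2 = v ^ 2 / d + ε) :
    u ^ 2 / a ^ 2 - 2 * t / (a * b) + v ^ 2 / b ^ 2 ≤ (u ^ 2 + v ^ 2 - 2 * t) / ε := by
  have hd0 : (0:ℝ) < d := lt_of_lt_of_le one_pos hd
  have huv : 0 ≤ u * v / d := by positivity
  have ha0 : 0 < a := by nlinarith [div_nonneg (sq_nonneg u) hd0.le]
  have hb0 : 0 < b := by nlinarith [div_nonneg (sq_nonneg v) hd0.le]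
  have hc2 : (a * b) ^ 2 = (u ^ 2 / d + ε) * (v ^ 2 / d + ε) := by
    rw [mul_pow, ha2, hb2]
  have hid : (u ^ 2 / d + ε) * (v ^ 2 / d + ε) - (u * v / d + ε) ^ 2 = ε * (u - v) ^ 2 / d := by
    field_simp; ring
  have hab : u * v / d + ε ≤ a * b := by
    have h1 : (u * v / d + ε) ^ 2 ≤ (a * b) ^ 2 := by
      rw [hc2]; nlinarith [div_nonneg (mul_nonneg hε.le (sq_nonneg (u - v))) hd0.le]
    nlinarith [mul_pos ha0 hb0]
  have habε : 0 ≤ a * b - ε := by linarith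
  have key2 : 0 ≤ b ^ 2 * u ^ 2 * (a ^ 2 - ε) + a ^ 2 * v ^ 2 * (b ^ 2 - ε)
      - 2 * (a * b) * t * (a * b - ε) := by
    have h3 : 2 * (a * b) * t * (a * b - ε) ≤ 2 * (a * b) * (u * v) * (a * b - ε) := by
      have h0 : 0 ≤ 2 * (a * b) * (a * b - ε) :=
        mul_nonneg (by positivity) habε
      calc 2 * (a * b) * t * (a * b - ε) = (2 * (a * b) * (a * b - ε)) * t := by ring
        _ ≤ (2 * (a * b) * (a * b - ε)) * (u * v) := mul_le_mul_of_nonneg_left ht h0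
        _ = 2 * (a * b) * (u * v) * (a * b - ε) := by ring
    have h4 : 2 * (a * b) * (u * v) * (a * b - ε)
        ≤ 2 * (u * v) * ((u ^ 2 / d + ε) * (v ^ 2 / d + ε)) - 2 * (u * v) * ε * (u * v / d + ε) := by
      have e1 : 2 * (a * b) * (u * v) * (a * b - ε)
          = 2 * (u * v) * (a * b) ^ 2 - 2 * (u * v) * ε * (a * b) := by ring
      rw [e1, hc2]
      have h5 : 2 * (u * v) * ε * (u * v / d + ε) ≤ 2 * (u * v) * ε * (a * b) :=
        mul_le_mul_of_nonneg_left hab (by positivity)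
      linarith
    have h6 : 2 * (u * v) * ((u ^ 2 / d + ε) * (v ^ 2 / d + ε)) - 2 * (u * v) * ε * (u * v / d + ε)
        ≤ b ^ 2 * u ^ 2 * (a ^ 2 - ε) + a ^ 2 * v ^ 2 * (b ^ 2 - ε) := by
      have e2 : a ^ 2 - ε = u ^ 2 / d := by rw [ha2]; ring
      have e3 : b ^ 2 - ε = v ^ 2 / d := by rw [hb2]; ring
      rw [e2, e3, ha2, hb2]
      have hident : (v ^ 2 / d + ε) * u ^ 2 * (u ^ 2 / d) + (u ^ 2 / d + ε) * v ^ 2 * (v ^ 2 / d)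
          - (2 * (u * v) * ((u ^ 2 / d + ε) * (v ^ 2 / d + ε)) - 2 * (u * v) * ε * (u * v / d + ε))
          = u ^ 2 * v ^ 2 * (u - v) ^ 2 / d ^ 2 + ε * (u ^ 2 + v ^ 2) * (u - v) ^ 2 / d := by
        field_simp; ring
      have nn1 : 0 ≤ u ^ 2 * v ^ 2 * (u - v) ^ 2 / d ^ 2 := by positivity
      have nn2 : 0 ≤ ε * (u ^ 2 + v ^ 2) * (u - v) ^ 2 / d := by positivity
      linarith [hident]
    linarith
  have hdiff : (u ^ 2 + v ^ 2 - 2 * t) / ε - (u ^ 2 / a ^ 2 - 2 * t / (a * b) + v ^ 2 / b ^ 2)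
      = (b ^ 2 * u ^ 2 * (a ^ 2 - ε) + a ^ 2 * v ^ 2 * (b ^ 2 - ε)
        - 2 * (a * b) * t * (a * b - ε)) / (ε * a ^ 2 * b ^ 2) := by
    field_simp
    ring
  have hfin : 0 ≤ (u ^ 2 + v ^ 2 - 2 * t) / ε - (u ^ 2 / a ^ 2 - 2 * t / (a * b) + v ^ 2 / b ^ 2) := by
    rw [hdiff]
    exact div_nonneg key2 (by positivity)
  linarith

lemma rms_norm_sq_eq_sum' {d : ℕ} (x : EuclideanSpace ℝ (Fin d)) :
    ‖x‖ ^ 2 = ∑ i, x i ^ 2 := by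
  rw [EuclideanSpace.norm_eq, Real.sq_sqrt (by positivity)]
  simp [sq_abs]

/-- Lipschitz continuity of RMSNorm: for `RMSNorm(x) = diag(g) · x / √((1/d)‖x‖₂² + ε)`,
`‖RMSNorm(x₁) − RMSNorm(x₂)‖₂ ≤ (‖g‖_∞ / √ε) · ‖x₁ − x₂‖₂`. -/
theorem rmsnorm_lipschitz (d : ℕ) (hd : 1 ≤ d) (ε : ℝ) (hε : 0 < ε)
    (g : Fin d → ℝ)
    (RMSNorm : EuclideanSpace ℝ (Fin d) → EuclideanSpace ℝ (Fin d))
    (hRMS : ∀ (x : EuclideanSpace ℝ (Fin d)) (i : Fin d),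
      RMSNorm x i = g i * x i / Real.sqrt ((1 / (d : ℝ)) * ‖x‖ ^ 2 + ε))
    (x₁ x₂ : EuclideanSpace ℝ (Fin d)) :
    ‖RMSNorm x₁ - RMSNorm x₂‖ ≤
      ((Finset.univ.sup' (Finset.univ_nonempty_iff.mpr ⟨⟨0, hd⟩⟩) fun i => |g i|)
          / Real.sqrt ε) * ‖x₁ - x₂‖ := by
  have hd0 : (0:ℝ) < d := by exact_mod_cast Nat.lt_of_lt_of_le Nat.zero_lt_one hd
  set M := (Finset.univ.sup' (Finset.univ_nonempty_iff.mpr ⟨⟨0, hd⟩⟩) fun i => |g i|) with hMdef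
  have hM : ∀ i, |g i| ≤ M := fun i => Finset.le_sup' (fun j => |g j|) (Finset.mem_univ i)
  have hM0 : 0 ≤ M := le_trans (abs_nonneg _) (hM ⟨0, hd⟩)
  set a := Real.sqrt ((1 / (d : ℝ)) * ‖x₁‖ ^ 2 + ε) with hadef
  set b := Real.sqrt ((1 / (d : ℝ)) * ‖x₂‖ ^ 2 + ε) with hbdef
  have ha : 0 ≤ a := Real.sqrt_nonneg _
  have hb : 0 ≤ b := Real.sqrt_nonneg _
  have ha2 : a ^ 2 = ‖x₁‖ ^ 2 / d + ε := by
    rw [hadef, Real.sq_sqrt (by positivity)]; ring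
  have hb2 : b ^ 2 = ‖x₂‖ ^ 2 / d + ε := by
    rw [hbdef, Real.sq_sqrt (by positivity)]; ring
  set t := ∑ i, x₁ i * x₂ i with htdef
  have ht : t ≤ ‖x₁‖ * ‖x₂‖ := by
    have := real_inner_le_norm x₁ x₂
    simpa [PiLp.inner_apply, RCLike.inner_apply, htdef, mul_comm] using this
  have hinner : (inner ℝ x₁ x₂ : ℝ) = t := by
    simp [PiLp.inner_apply, RCLike.inner_apply, htdef, mul_comm]
  have hnormsub : ‖x₁ - x₂‖ ^ 2 = ‖x₁‖ ^ 2 + ‖x₂‖ ^ 2 - 2 * t := by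
    rw [norm_sub_sq_real, hinner]; ring
  -- key scalar inequality
  have hkey : ‖x₁‖ ^ 2 / a ^ 2 - 2 * t / (a * b) + ‖x₂‖ ^ 2 / b ^ 2
      ≤ (‖x₁‖ ^ 2 + ‖x₂‖ ^ 2 - 2 * t) / ε :=
    rms_key d ε ‖x₁‖ ‖x₂‖ t a b (by exact_mod_cast hd) hε (norm_nonneg _) (norm_nonneg _)
      ht ha hb ha2 hb2
  -- expand the squared norm of the difference
  have hsum : ‖RMSNorm x₁ - RMSNorm x₂‖ ^ 2 = ∑ i, (g i * (x₁ i / a - x₂ i / b)) ^ 2 := by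
    rw [rms_norm_sq_eq_sum']
    refine Finset.sum_congr rfl fun i _ => ?_
    have h : (RMSNorm x₁ - RMSNorm x₂) i = RMSNorm x₁ i - RMSNorm x₂ i := by simp
    rw [h, hRMS, hRMS]
    ring
  have hexp : ∑ i, (x₁ i / a - x₂ i / b) ^ 2
      = ‖x₁‖ ^ 2 / a ^ 2 - 2 * t / (a * b) + ‖x₂‖ ^ 2 / b ^ 2 := by
    have e1 : ∑ i, (x₁ i / a - x₂ i / b) ^ 2
        = ∑ i, (x₁ i ^ 2 / a ^ 2 - 2 * (x₁ i * x₂ i) / (a * b) + x₂ i ^ 2 / b ^ 2) :=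
      Finset.sum_congr rfl fun i _ => by ring
    rw [e1, Finset.sum_add_distrib, Finset.sum_sub_distrib, ← Finset.sum_div, ← Finset.sum_div,
      ← Finset.sum_div, ← Finset.mul_sum, rms_norm_sq_eq_sum' x₁, rms_norm_sq_eq_sum' x₂, htdef]
  have hsq : ‖RMSNorm x₁ - RMSNorm x₂‖ ^ 2 ≤ (M / Real.sqrt ε * ‖x₁ - x₂‖) ^ 2 := by
    have hb1 : ‖RMSNorm x₁ - RMSNorm x₂‖ ^ 2 ≤ M ^ 2 * ∑ i, (x₁ i / a - x₂ i / b) ^ 2 := by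
      rw [hsum, Finset.mul_sum]
      refine Finset.sum_le_sum fun i _ => ?_
      have hg : g i ^ 2 ≤ M ^ 2 := by
        have := hM i
        nlinarith [abs_nonneg (g i), sq_abs (g i)]
      calc (g i * (x₁ i / a - x₂ i / b)) ^ 2 = g i ^ 2 * (x₁ i / a - x₂ i / b) ^ 2 := by ring
        _ ≤ M ^ 2 * (x₁ i / a - x₂ i / b) ^ 2 :=
            mul_le_mul_of_nonneg_right hg (sq_nonneg _)
    have hb2' : M ^ 2 * ∑ i, (x₁ i / a - x₂ i / b) ^ 2
        ≤ M ^ 2 * ((‖x₁‖ ^ 2 + ‖x₂‖ ^ 2 - 2 * t) / ε) := by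
      apply mul_le_mul_of_nonneg_left _ (sq_nonneg M)
      rw [hexp]; exact hkey
    have heq : M ^ 2 * ((‖x₁‖ ^ 2 + ‖x₂‖ ^ 2 - 2 * t) / ε)
        = (M / Real.sqrt ε * ‖x₁ - x₂‖) ^ 2 := by
      rw [← hnormsub]
      rw [mul_pow, div_pow, Real.sq_sqrt hε.le]
      ring
    linarith
  have hR : 0 ≤ M / Real.sqrt ε * ‖x₁ - x₂‖ := by positivity
  calc ‖RMSNorm x₁ - RMSNorm x₂‖ = Real.sqrt (‖RMSNorm x₁ - RMSNorm x₂‖ ^ 2) :=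
        (Real.sqrt_sq (norm_nonneg _)).symm
    _ ≤ Real.sqrt ((M / Real.sqrt ε * ‖x₁ - x₂‖) ^ 2) := Real.sqrt_le_sqrt hsq
    _ = M / Real.sqrt ε * ‖x₁ - x₂‖ := Real.sqrt_sq hR
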